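/- The n-variable AND function has goal value exactly n, i.e., Γ(AND_n) = n. -/

import Mathlib

attribute [local instance] Classical.propDecidable

/-- `b'` extends the partial assignment `b`: it agrees on all non-`*` coordinates of `b`. -/
def Extends {n : ℕ} (b' b : Fin n → Option Bool) : Prop :=
  ∀ i v, b i = some v → b' i = some v

/-- A total assignment `x` extends the partial assignment `b`. -/
def TExtends {n : ℕ} (x : Fin n → Bool) (b : Fin n → Option Bool) : Prop :=
  ∀ i v, b i = some v → x i = v

/-- `b` is a certificate of `f`: `f` is constant on all total extensions of `b`. -/
def IsCert {n : ℕ} (f : (Fin n → Bool) → Bool) (b : Fin n → Option Bool) : Prop :=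
  ∀ x y, TExtends x b → TExtends y b → f x = f y

/-- `b` is a `k`-certificate of `f`: it forces `f` to the value `k`. -/
def IsKCert {n : ℕ} (f : (Fin n → Bool) → Bool) (k : Bool) (b : Fin n → Option Bool) : Prop :=
  ∀ x, TExtends x b → f x = k

/-- A certificate is minimal if no proper restriction of it is a certificate. -/
def MinCert {n : ℕ} (f : (Fin n → Bool) → Bool) (c : Fin n → Option Bool) : Prop :=
  IsCert f c ∧ ∀ c', Extends c c' → c' ≠ c → ¬ IsCert f c'

/-- A `k`-certificate is minimal if no proper restriction of it is a `k`-certificate. -/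
def MinKCert {n : ℕ} (f : (Fin n → Bool) → Bool) (k : Bool) (c : Fin n → Option Bool) : Prop :=
  IsKCert f k c ∧ ∀ c', Extends c c' → c' ≠ c → ¬ IsKCert f k c'

/-- Monotone utility function: filling in `*`'s never decreases the value. -/
def Mono {n : ℕ} (g : (Fin n → Option Bool) → ℕ) : Prop :=
  ∀ b b', Extends b' b → g b ≤ g b'

/-- Submodular utility function: marginal gains shrink under extension. -/
def Submod {n : ℕ} (g : (Fin n → Option Bool) → ℕ) : Prop :=
  ∀ b b' (i : Fin n) (ℓ : Bool), Extends b' b → b i = none → b' i = none →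
    g (Function.update b' i (some ℓ)) + g b ≤ g (Function.update b i (some ℓ)) + g b'

/-- `g` is a goal function for `f` with goal value `Q`. -/
def GoalFn {n : ℕ} (f : (Fin n → Bool) → Bool) (g : (Fin n → Option Bool) → ℕ)
    (Q : ℕ) : Prop :=
  Mono g ∧ Submod g ∧ ∀ b, g b = Q ↔ IsCert f b

/-- `g` is a `k`-goal function for `f` with goal value `Q`. -/
def KGoalFn {n : ℕ} (f : (Fin n → Bool) → Bool) (k : Bool)
    (g : (Fin n → Option Bool) → ℕ) (Q : ℕ) : Prop :=
  Mono g ∧ Submod g ∧ (∀ b, IsKCert f k b → g b = Q) ∧ (∀ b, ¬ IsKCert f k b → g b < Q)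

/-- The goal value `Γ(f)`: the minimum goal value of any goal function for `f`. -/
noncomputable def gamma {n : ℕ} (f : (Fin n → Bool) → Bool) : ℕ :=
  sInf {Q | ∃ g, GoalFn f g Q}

/-- The `k`-goal value `Γ^k(f)`. -/
noncomputable def gammaK {n : ℕ} (f : (Fin n → Bool) → Bool) (k : Bool) : ℕ :=
  sInf {Q | ∃ g, KGoalFn f k g Q}

/-- The weight of a partial assignment: the number of non-`*` coordinates. -/
noncomputable def wt {n : ℕ} (b : Fin n → Option Bool) : ℕ :=
  (Finset.univ.filter (fun i => (b i).isSome)).card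

/-- `f` depends on its `i`-th variable. -/
def DependsOnVar {n : ℕ} (f : (Fin n → Bool) → Bool) (i : Fin n) : Prop :=
  ∃ x, f (Function.update x i true) ≠ f (Function.update x i false)

/-! ### Auxiliary development for `stmt7` -/

/-- The explicit goal function for `AND_n`. -/
noncomputable def gAND (n : ℕ) (b : Fin n → Option Bool) : ℕ :=
  if ∃ i, b i = some false then n
  else (Finset.univ.filter (fun i => b i = some true)).card

lemma gAND_card_le (n : ℕ) (b : Fin n → Option Bool) :
    (Finset.univ.filter (fun i => b i = some true)).card ≤ n := by
  calc (Finset.univ.filter (fun i => b i = some true)).card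
      ≤ (Finset.univ : Finset (Fin n)).card := Finset.card_filter_le _ _
    _ = n := by simp

lemma gAND_le (n : ℕ) (b : Fin n → Option Bool) : gAND n b ≤ n := by
  unfold gAND
  split
  · exact le_rfl
  · exact gAND_card_le n b

lemma filter_update_true {n : ℕ} (b : Fin n → Option Bool) (i : Fin n)
    (hb : b i = none) :
    (Finset.univ.filter (fun j => Function.update b i (some true) j = some true))
      = insert i (Finset.univ.filter (fun j => b j = some true)) := by
  ext j
  by_cases hj : j = i
  · subst hj; simp [Function.update]
  · simp [Function.update, hj]

lemma gAND_update_true {n : ℕ} (b : Fin n → Option Bool) (i : Fin n)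
    (hb : b i = none) (hF : ¬ ∃ j, b j = some false) :
    gAND n (Function.update b i (some true)) = gAND n b + 1 := by
  have hF' : ¬ ∃ j, Function.update b i (some true) j = some false := by
    rintro ⟨j, hj⟩
    by_cases hji : j = i
    · subst hji; simp [Function.update] at hj
    · exact hF ⟨j, by simpa [Function.update, hji] using hj⟩
  unfold gAND
  rw [if_neg hF', if_neg hF, filter_update_true b i hb]
  rw [Finset.card_insert_of_notMem (by simp [hb])]

lemma gAND_mono (n : ℕ) : Mono (gAND n) := by
  intro b b' h
  unfold gAND
  by_cases hF : ∃ i, b i = some false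
  · obtain ⟨i, hi⟩ := hF
    have : ∃ i, b' i = some false := ⟨i, h i false hi⟩
    rw [if_pos ⟨i, hi⟩, if_pos this]
  · rw [if_neg hF]
    by_cases hF' : ∃ i, b' i = some false
    · rw [if_pos hF']; exact gAND_card_le n b
    · rw [if_neg hF']
      apply Finset.card_le_card
      intro j hj
      simp only [Finset.mem_filter, Finset.mem_univ, true_and] at hj ⊢
      exact h j true hj

lemma gAND_submod (n : ℕ) : Submod (gAND n) := by
  intro b b' i ℓ hext hb hb'
  have hext1 : Extends (Function.update b' i (some ℓ)) (Function.update b i (some ℓ)) := by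
    intro j v hj
    by_cases hji : j = i
    · subst hji; simpa [Function.update] using hj
    · simp only [Function.update, dif_neg hji] at hj ⊢
      exact hext j v hj
  cases ℓ with
  | false =>
    have h1 : gAND n (Function.update b' i (some false)) = n := by
      unfold gAND
      rw [if_pos ⟨i, by simp [Function.update]⟩]
    have h2 : gAND n (Function.update b i (some false)) = n := by
      unfold gAND
      rw [if_pos ⟨i, by simp [Function.update]⟩]
    rw [h1, h2]
    have := gAND_mono n b b' hext
    omega
  | true =>
    by_cases hF' : ∃ j, b' j = some false
    · -- b' contains a false; update b' with true still does
      obtain ⟨j, hj⟩ := hF'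
      have hji : j ≠ i := fun h => by rw [h, hb'] at hj; exact nomatch hj
      have h1 : gAND n (Function.update b' i (some true)) = n := by
        unfold gAND
        rw [if_pos ⟨j, by simpa [Function.update, hji] using hj⟩]
      rw [h1]
      have h3 : gAND n b ≤ gAND n (Function.update b i (some true)) := by
        apply gAND_mono
        intro k v hk
        have hki : k ≠ i := fun h => by rw [h, hb] at hk; exact nomatch hk
        simpa [Function.update, hki] using hk
      have h6 : gAND n b' = n := by
        unfold gAND; rw [if_pos ⟨j, hj⟩]
      omega
    · have hF : ¬ ∃ j, b j = some false := by
        rintro ⟨j, hj⟩; exact hF' ⟨j, hext j false hj⟩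
      rw [gAND_update_true b i hb hF, gAND_update_true b' i hb' hF']
      omega

lemma gAND_goal (n : ℕ) :
    GoalFn (fun x : Fin n → Bool => decide (∀ i, x i = true)) (gAND n) n := by
  refine ⟨gAND_mono n, gAND_submod n, ?_⟩
  intro b
  constructor
  · intro hQ x y hx hy
    unfold gAND at hQ
    split at hQ
    · -- b contains a false: f is constantly false on extensions
      rename_i hF
      obtain ⟨i, hi⟩ := hF
      have hxf : x i = false := hx i false hi
      have hyf : y i = false := hy i false hi
      simp only [decide_eq_decide]
      constructor
      · intro h; exact absurd (h i) (by simp [hxf])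
      · intro h; exact absurd (h i) (by simp [hyf])
    · -- no false and card = n: all coordinates are `some true`
      rename_i hF
      have hall : ∀ i, b i = some true := by
        have huniv : (Finset.univ.filter (fun i => b i = some true)) = Finset.univ := by
          apply Finset.eq_univ_of_card
          rw [hQ]; simp
        intro i
        have := Finset.mem_univ i
        rw [← huniv, Finset.mem_filter] at this
        exact this.2
      have hxt : ∀ i, x i = true := fun i => hx i true (hall i)
      have hyt : ∀ i, y i = true := fun i => hy i true (hall i)
      simp [hxt, hyt]
  · intro hcert
    by_cases hF : ∃ i, b i = some false
    · unfold gAND; rw [if_pos hF]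
    · have hall : ∀ i, b i = some true := by
        intro i
        by_contra hi
        have hbi : b i = none := by
          cases hbv : b i with
          | none => rfl
          | some v =>
            cases v with
            | false => exact absurd ⟨i, hbv⟩ hF
            | true => exact absurd hbv hi
        -- build two extensions with different values
        set x : Fin n → Bool := fun _ => true with hxdef
        set y : Fin n → Bool := fun j => if j = i then false else true with hydef
        have hx : TExtends x b := by
          intro j v hj
          have : v = true := by
            cases v with
            | false => exact absurd ⟨j, hj⟩ hF
            | true => rfl
          simp [hxdef, this]
        have hy : TExtends y b := by
          intro j v hj
          have hji : j ≠ i := fun h => by rw [h, hbi] at hj; exact nomatch hj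
          have : v = true := by
            cases v with
            | false => exact absurd ⟨j, hj⟩ hF
            | true => rfl
          simp [hydef, hji, this]
        have := hcert x y hx hy
        simp only [decide_eq_decide] at this
        have h2 := (this.mp (fun j => by simp [hxdef])) i
        simp [hydef] at h2
      unfold gAND
      rw [if_neg hF]
      have huniv : (Finset.univ.filter (fun i => b i = some true)) = Finset.univ := by
        apply Finset.eq_univ_iff_forall.mpr
        intro i; simp [hall i]
      rw [huniv]; simp

lemma gAND_lower (n : ℕ) (g : (Fin n → Option Bool) → ℕ) (Q : ℕ)
    (hg : GoalFn (fun x : Fin n → Bool => decide (∀ i, x i = true)) g Q) : n ≤ Q := by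
  obtain ⟨hmono, hsub, hiff⟩ := hg
  -- the chain of partial assignments: first `k` coordinates set to `true`
  set B : ℕ → (Fin n → Option Bool) :=
    fun k j => if (j : ℕ) < k then some true else none with hB
  set full : Fin n → Option Bool := fun _ => some true with hfull
  have hfullcert : IsCert (fun x : Fin n → Bool => decide (∀ i, x i = true)) full := by
    intro x y hx hy
    have hxt : ∀ i, x i = true := fun i => hx i true rfl
    have hyt : ∀ i, y i = true := fun i => hy i true rfl
    simp [hxt, hyt]
  have hgfull : g full = Q := (hiff full).mpr hfullcert
  -- one step of the chain
  have hstep : ∀ k, k < n → g (B k) + 1 ≤ g (B (k + 1)) := by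
    intro k hk
    set i : Fin n := ⟨k, hk⟩ with hi
    set b' : Fin n → Option Bool := fun j => if j = i then none else some true with hb'def
    have hext : Extends b' (B k) := by
      intro j v hj
      simp only [hB] at hj
      split at hj
      · rename_i hjk
        have hji : j ≠ i := by
          intro h; rw [h] at hjk; simp [hi] at hjk
        simp [hb'def, hji, ← hj]
      · exact nomatch hj
    have hbk : B k i = none := by simp [hB, hi]
    have hb'i : b' i = none := by simp [hb'def]
    have hsm := hsub (B k) b' i true hext hbk hb'i
    have hup1 : Function.update b' i (some true) = full := by
      funext j
      by_cases hji : j = i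
      · subst hji; simp [Function.update, hfull]
      · simp [Function.update, hji, hb'def, hfull]
    have hup2 : Function.update (B k) i (some true) = B (k + 1) := by
      funext j
      by_cases hji : j = i
      · subst hji; simp [Function.update, hB, hi]
      · have hjk : (j : ℕ) ≠ k := by
          intro h; exact hji (Fin.ext h)
        simp only [Function.update, dif_neg hji, hB]
        rcases Nat.lt_trichotomy (j : ℕ) k with h | h | h
        · rw [if_pos h, if_pos (Nat.lt_succ_of_lt h)]
        · exact absurd h hjk
        · rw [if_neg (Nat.not_lt.mpr (Nat.le_of_lt h)),
            if_neg (Nat.not_lt.mpr h)]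
    rw [hup1, hup2, hgfull] at hsm
    -- `b'` is not a certificate, so `g b' < Q`
    have hnc : ¬ IsCert (fun x : Fin n → Bool => decide (∀ i, x i = true)) b' := by
      intro hcert
      set x : Fin n → Bool := fun _ => true with hx
      set y : Fin n → Bool := fun j => if j = i then false else true with hy
      have hxe : TExtends x b' := by
        intro j v hj
        simp only [hb'def] at hj
        split at hj
        · exact nomatch hj
        · simp [hx, ← Option.some_inj.mp hj]
      have hye : TExtends y b' := by
        intro j v hj
        simp only [hb'def] at hj
        split at hj
        · exact nomatch hj
        · rename_i hji
          simp [hy, hji, ← Option.some_inj.mp hj]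
      have := hcert x y hxe hye
      simp only [decide_eq_decide] at this
      have h2 := (this.mp (fun j => by simp [hx])) i
      simp [hy] at h2
    have hblt : g b' < Q := by
      have hle : g b' ≤ Q := by
        have : Extends full b' := by
          intro j v hj
          simp only [hb'def] at hj
          split at hj
          · exact nomatch hj
          · simp [hfull, ← Option.some_inj.mp hj]
        have := hmono b' full this
        omega
      have hne : g b' ≠ Q := fun h => hnc ((hiff b').mp h)
      omega
    omega
  -- iterate the step
  have hchain : ∀ k, k ≤ n → k ≤ g (B k) := by
    intro k
    induction k with
    | zero => intro _; exact Nat.zero_le _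
    | succ m ih =>
      intro hm
      have h1 := ih (Nat.le_of_succ_le hm)
      have h2 := hstep m (Nat.lt_of_succ_le hm)
      omega
  have hBn : B n = full := by
    funext j
    simp [hB, hfull, j.isLt]
  have := hchain n le_rfl
  rw [hBn, hgfull] at this
  exact this

/-- the `n`-variable AND function has goal value exactly `n`. -/
theorem stmt7 (n : ℕ) :
    gamma (fun x : Fin n → Bool => decide (∀ i, x i = true)) = n := by
  have hmem : n ∈ {Q | ∃ g, GoalFn (fun x : Fin n → Bool => decide (∀ i, x i = true)) g Q} :=
    ⟨gAND n, gAND_goal n⟩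
  refine le_antisymm (Nat.sInf_le hmem) (le_csInf ⟨n, hmem⟩ ?_)
  rintro Q ⟨g, hg⟩
  exact gAND_lower n g Q hg
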